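/- arXiv:2201.06904 — 6 statements merged into one kernel-verified Lean document; each statement's English description precedes it below -/
import Mathlib

section
/- In a Schelling instance on a cubic graph G with |V|/2 red and |V|/2 blue agents where all vertices are occupied, the group welfare of each type under an assignment v equals |V|/2 − c(v)/3, where c(v) is the number of edges with endpoints of different types. Consequently, there exists an assignment with SW_R(v) ≥ |V|/2 − k/3 and SW_B(v) ≥ |V|/2 − k/3 if and only if V admits a bisection into two equal halves with at most k crossing edges. -/
open Classical Finset

noncomputable section

variable {V A T : Type*}

def occNbrs (G : SimpleGraph V) [Fintype A] (v : A ↪ V) (i : A) : Finset A :=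
  univ.filter fun j => G.Adj (v i) (v j)

def util (G : SimpleGraph V) [Fintype A] (τ : A → T) (v : A ↪ V) (i : A) : ℚ :=
  if (occNbrs G v i).card = 0 then 0
  else ((occNbrs G v i).filter fun j => τ j = τ i).card / (occNbrs G v i).card

def SW (G : SimpleGraph V) [Fintype A] (τ : A → T) (v : A ↪ V) : ℚ :=
  ∑ i, util G τ v i

def sortedUtilOn (G : SimpleGraph V) [Fintype A] (τ : A → T) (v : A ↪ V) (S : Finset A) : List ℚ :=
  Multiset.sort (S.val.map (util G τ v)) (· ≥ ·)

def weakDom (x y : List ℚ) : Prop :=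
  x.length = y.length ∧ ∀ (i : ℕ) (hx : i < x.length) (hy : i < y.length), y.get ⟨i, hy⟩ ≤ x.get ⟨i, hx⟩

def strictDom (x y : List ℚ) : Prop :=
  weakDom x y ∧ ∃ (i : ℕ) (hx : i < x.length) (hy : i < y.length), y.get ⟨i, hy⟩ < x.get ⟨i, hx⟩

section Aux

variable [Fintype V] [Fintype A]

lemma cut_count (G : SimpleGraph V) (σ : V → Bool) (c : Bool) :
    ∑ x ∈ univ.filter (fun x => σ x = c),
      (univ.filter fun y => G.Adj x y ∧ σ y ≠ c).card
    = (G.edgeFinset.filter fun e => ¬ (e.map σ).IsDiag).card := by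
  classical
  have h1 : ∑ x ∈ univ.filter (fun x => σ x = c),
      (univ.filter fun y => G.Adj x y ∧ σ y ≠ c).card
      = ∑ x : V, (univ.filter fun y => G.Adj x y ∧ σ x = c ∧ σ y ≠ c).card := by
    rw [Finset.sum_filter]
    refine Finset.sum_congr rfl fun x _ => ?_
    by_cases hx : σ x = c
    · simp [hx]
    · simp [hx, Finset.filter_false_of_mem]
  rw [h1]
  set Pairs := (univ ×ˢ univ : Finset (V × V)).filter
      (fun p => G.Adj p.1 p.2 ∧ σ p.1 = c ∧ σ p.2 ≠ c) with hP
  have h2 : Pairs.card = ∑ x : V, (univ.filter fun y => G.Adj x y ∧ σ x = c ∧ σ y ≠ c).card := by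
    rw [Finset.card_eq_sum_card_fiberwise (f := Prod.fst) (t := univ) (fun p _ => mem_univ _)]
    refine Finset.sum_congr rfl fun x _ => ?_
    refine Finset.card_bij (fun p _ => p.2) ?_ ?_ ?_
    · rintro ⟨a, b⟩ hp
      simp only [hP, Finset.mem_filter, Finset.mem_product] at hp ⊢
      obtain ⟨⟨-, h⟩, rfl⟩ := hp
      simpa using h
    · rintro ⟨a, b⟩ ha ⟨a', b'⟩ ha' h
      simp only [hP, Finset.mem_filter] at ha ha'
      obtain ⟨-, rfl⟩ := ha; obtain ⟨-, rfl⟩ := ha'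
      simp_all
    · intro y hy
      simp only [Finset.mem_filter, Finset.mem_univ, true_and] at hy
      exact ⟨(x, y), by simp [hP, hy], rfl⟩
  rw [← h2]
  refine Finset.card_bij (fun p _ => s(p.1, p.2)) ?_ ?_ ?_
  · rintro ⟨a, b⟩ hp
    simp only [hP, Finset.mem_filter, Finset.mem_product] at hp
    obtain ⟨-, hadj, hac, hbc⟩ := hp
    simp only [Finset.mem_filter, SimpleGraph.mem_edgeFinset, SimpleGraph.mem_edgeSet,
      Sym2.map_pair_eq, Sym2.isDiag_iff_proj_eq]
    exact ⟨hadj, by simp [hac]; intro h; exact hbc h.symm⟩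
  · rintro ⟨a, b⟩ ha ⟨a', b'⟩ ha' h
    simp only [hP, Finset.mem_filter] at ha ha'
    obtain ⟨-, -, hac, hbc⟩ := ha; obtain ⟨-, -, hac', hbc'⟩ := ha'
    rw [Sym2.eq_iff] at h
    rcases h with ⟨rfl, rfl⟩ | ⟨rfl, rfl⟩
    · rfl
    · exact absurd hac' hbc
  · intro e he
    induction e using Sym2.ind with
    | _ a b =>
      simp only [Finset.mem_filter, SimpleGraph.mem_edgeFinset, SimpleGraph.mem_edgeSet,
        Sym2.map_pair_eq, Sym2.isDiag_iff_proj_eq] at he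
      obtain ⟨hadj, hne⟩ := he
      by_cases hc : σ a = c
      · exact ⟨(a, b), by simp [hP, hadj, hc]; intro h; exact hne (hc.trans h.symm), rfl⟩
      · have hbc : σ b = c := by
          cases c <;> cases hb' : σ b <;> simp_all
        exact ⟨(b, a), by simp [hP, hadj.symm, hbc]; exact hc, Sym2.eq_swap⟩

lemma same_plus_cut (G : SimpleGraph V) (hreg : G.IsRegularOfDegree 3) (σ : V → Bool) (c : Bool) :
    ∑ x ∈ univ.filter (fun x => σ x = c), (univ.filter fun y => G.Adj x y ∧ σ y = c).card
    + (G.edgeFinset.filter fun e => ¬ (e.map σ).IsDiag).card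
    = 3 * (univ.filter (fun x => σ x = c)).card := by
  classical
  rw [← cut_count G σ c, ← Finset.sum_add_distrib]
  have : ∀ x ∈ univ.filter (fun x => σ x = c),
      (univ.filter fun y => G.Adj x y ∧ σ y = c).card
      + (univ.filter fun y => G.Adj x y ∧ σ y ≠ c).card = 3 := by
    intro x _
    have h1 : (univ.filter fun y => G.Adj x y ∧ σ y = c)
        = (univ.filter (G.Adj x)).filter (fun y => σ y = c) := by
      rw [Finset.filter_filter]
    have h2 : (univ.filter fun y => G.Adj x y ∧ σ y ≠ c)
        = (univ.filter (G.Adj x)).filter (fun y => ¬ σ y = c) := by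
      rw [Finset.filter_filter]
    rw [h1, h2, Finset.card_filter_add_card_filter_not,
      ← SimpleGraph.neighborFinset_eq_filter, SimpleGraph.card_neighborFinset_eq_degree]
    exact hreg x
  rw [Finset.sum_congr rfl this, Finset.sum_const, smul_eq_mul, mul_comm]

lemma occ_card (G : SimpleGraph V) (hreg : G.IsRegularOfDegree 3) (v : A ≃ V) (i : A) :
    (occNbrs G v.toEmbedding i).card = 3 := by
  rw [show (3 : ℕ) = G.degree (v i) from (hreg (v i)).symm,
    ← SimpleGraph.card_neighborFinset_eq_degree]
  exact Finset.card_equiv v (by simp [occNbrs, SimpleGraph.mem_neighborFinset])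

lemma util_eq_equiv (G : SimpleGraph V) (hreg : G.IsRegularOfDegree 3) (v : A ≃ V)
    (τ : A → Bool) (c : Bool) (i : A) (hi : τ i = c) :
    util G τ v.toEmbedding i
    = ((univ.filter fun y => G.Adj (v i) y ∧ τ (v.symm y) = c).card : ℚ) / 3 := by
  rw [util, occ_card G hreg v i]
  norm_num
  congr 1
  exact Finset.card_equiv v (fun j => by simp [occNbrs, hi])

lemma group_welfare (G : SimpleGraph V) (hreg : G.IsRegularOfDegree 3) (v : A ≃ V)
    (τ : A → Bool) (c : Bool) :
    ∑ i ∈ univ.filter (fun i => τ i = c), util G τ v.toEmbedding i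
    = ((univ.filter fun i => τ i = c).card : ℚ)
      - ((G.edgeFinset.filter fun e =>
          ¬ (e.map fun x => τ (v.symm x)).IsDiag).card : ℚ) / 3 := by
  classical
  set σ : V → Bool := fun x => τ (v.symm x) with hσ
  have hcardc : (univ.filter fun i => τ i = c).card = (univ.filter fun x => σ x = c).card :=
    Finset.card_equiv v (by simp [hσ])
  have hsum : ∑ i ∈ univ.filter (fun i => τ i = c), util G τ v.toEmbedding i
      = ∑ x ∈ univ.filter (fun x => σ x = c),
          ((univ.filter fun y => G.Adj x y ∧ σ y = c).card : ℚ) / 3 := by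
    refine Finset.sum_equiv v (by simp [hσ]) ?_
    intro i hi
    simp only [Finset.mem_filter] at hi
    exact util_eq_equiv G hreg v τ c i hi.2
  rw [hsum, ← Finset.sum_div, ← Nat.cast_sum, hcardc]
  have key := same_plus_cut G hreg σ c
  have hq : ((∑ x ∈ univ.filter (fun x => σ x = c),
      (univ.filter fun y => G.Adj x y ∧ σ y = c).card : ℕ) : ℚ)
      + ((G.edgeFinset.filter fun e => ¬ (e.map σ).IsDiag).card : ℚ)
      = 3 * ((univ.filter fun x => σ x = c).card : ℚ) := by
    exact_mod_cast congrArg (Nat.cast : ℕ → ℚ) key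
  linarith

end Aux

theorem cubic_group_welfare_and_bisection
    {V A : Type*} [Fintype V] [Fintype A]
    (G : SimpleGraph V) (hreg : G.IsRegularOfDegree 3)
    (heven : Even (Fintype.card V)) (hcard : Fintype.card A = Fintype.card V)
    (τ : A → Bool)
    (hr : (univ.filter (fun i => τ i = true)).card = Fintype.card V / 2)
    (hb : (univ.filter (fun i => τ i = false)).card = Fintype.card V / 2)
    (k : ℕ) :
    (∀ v : A ≃ V, ∀ c : Bool,
        (∑ i ∈ univ.filter (fun i => τ i = c), util G τ v.toEmbedding i) =
          (Fintype.card V : ℚ) / 2 -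
            ((G.edgeFinset.filter
                (fun e => ¬ (e.map (fun x => τ (v.symm x))).IsDiag)).card : ℚ) / 3) ∧
    ((∃ v : A ≃ V, ∀ c : Bool,
        (Fintype.card V : ℚ) / 2 - (k : ℚ) / 3 ≤
          ∑ i ∈ univ.filter (fun i => τ i = c), util G τ v.toEmbedding i) ↔
      (∃ L : Finset V, L.card = Fintype.card V / 2 ∧
        (G.edgeFinset.filter
            (fun e => ¬ (e.map (fun x => decide (x ∈ L))).IsDiag)).card ≤ k)) := by
  classical
  have hhalf : ((Fintype.card V / 2 : ℕ) : ℚ) = (Fintype.card V : ℚ) / 2 := by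
    have h2 : 2 * (Fintype.card V / 2) = Fintype.card V :=
      Nat.mul_div_cancel' heven.two_dvd
    rw [eq_div_iff (by norm_num : (2 : ℚ) ≠ 0), mul_comm]
    exact_mod_cast congrArg (Nat.cast : ℕ → ℚ) h2
  have part1 : ∀ v : A ≃ V, ∀ c : Bool,
      (∑ i ∈ univ.filter (fun i => τ i = c), util G τ v.toEmbedding i) =
        (Fintype.card V : ℚ) / 2 -
          ((G.edgeFinset.filter
              (fun e => ¬ (e.map (fun x => τ (v.symm x))).IsDiag)).card : ℚ) / 3 := by
    intro v c
    rw [group_welfare G hreg v τ c]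
    have hc : (univ.filter fun i => τ i = c).card = Fintype.card V / 2 := by
      cases c
      · exact hb
      · exact hr
    rw [hc, hhalf]
  refine ⟨part1, ?_, ?_⟩
  · rintro ⟨v, hv⟩
    have hvt := hv true
    rw [part1 v true] at hvt
    have hcutq : ((G.edgeFinset.filter
        (fun e => ¬ (e.map (fun x => τ (v.symm x))).IsDiag)).card : ℚ) ≤ (k : ℚ) := by
      linarith
    have hcutn : (G.edgeFinset.filter
        (fun e => ¬ (e.map (fun x => τ (v.symm x))).IsDiag)).card ≤ k := by
      exact_mod_cast hcutq
    refine ⟨univ.filter (fun x => τ (v.symm x) = true), ?_, ?_⟩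
    · rw [← hr]
      exact (Finset.card_equiv v (fun i => by simp)).symm
    · refine le_trans (le_of_eq ?_) hcutn
      congr 1
      refine Finset.filter_congr fun e _ => ?_
      have hfg : (fun x => decide (x ∈ univ.filter (fun x => τ (v.symm x) = true)))
          = fun x => τ (v.symm x) := by
        funext x
        simp
      rw [hfg]
  · rintro ⟨L, hL, hcut⟩
    have h1 : Fintype.card {i // τ i = true} = Fintype.card {x // x ∈ L} := by
      rw [Fintype.card_subtype, Fintype.card_coe, hr, hL]
    have h2 : Fintype.card {i // ¬ τ i = true} = Fintype.card {x // ¬ x ∈ L} := by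
      rw [Fintype.card_subtype_compl, Fintype.card_subtype_compl,
        Fintype.card_subtype, Fintype.card_coe, hr, hL, hcard]
    set v : A ≃ V := ((Equiv.sumCompl (fun i => τ i = true)).symm.trans
      (((Fintype.equivOfCardEq h1).sumCongr (Fintype.equivOfCardEq h2)).trans
        (Equiv.sumCompl (fun x => x ∈ L)))) with hvdef
    have hvL : ∀ x : V, τ (v.symm x) = true ↔ x ∈ L := by
      intro x
      by_cases hx : x ∈ L
      · simp only [hvdef, Equiv.symm_trans_apply, Equiv.symm_symm,
          Equiv.sumCompl_symm_apply_of_pos hx, Equiv.sumCongr_symm,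
          Equiv.sumCongr_apply, Sum.map_inl, Equiv.sumCompl_apply_inl]
        exact iff_of_true ((Fintype.equivOfCardEq h1).symm ⟨x, hx⟩).2 hx
      · simp only [hvdef, Equiv.symm_trans_apply, Equiv.symm_symm,
          Equiv.sumCompl_symm_apply_of_neg hx, Equiv.sumCongr_symm,
          Equiv.sumCongr_apply, Sum.map_inr, Equiv.sumCompl_apply_inr]
        exact iff_of_false ((Fintype.equivOfCardEq h2).symm ⟨x, hx⟩).2 hx
    have hfg : (fun x => τ (v.symm x)) = fun x => decide (x ∈ L) := by
      funext x
      have := hvL x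
      by_cases hx : x ∈ L
      · simp [hx, this.mpr hx]
      · have : τ (v.symm x) = false := by
          cases h : τ (v.symm x)
          · rfl
          · exact absurd (this.mp h) hx
        simp [hx, this]
    have hcutn : (G.edgeFinset.filter
        (fun e => ¬ (e.map (fun x => τ (v.symm x))).IsDiag)).card ≤ k := by
      refine le_trans (le_of_eq ?_) hcut
      congr 1
      refine Finset.filter_congr fun e _ => ?_
      rw [hfg]
    refine ⟨v, fun c => ?_⟩
    rw [part1 v c]
    have hq : ((G.edgeFinset.filter
        (fun e => ¬ (e.map (fun x => τ (v.symm x))).IsDiag)).card : ℚ) ≤ (k : ℚ) := by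
      exact_mod_cast hcutn
    linarith
end
end

section
/- Let H be a bipartite graph with parts L and R, let G be the complement graph of H on vertex set L ∪ R, and consider the Schelling instance on G with k red and k blue agents (k ≥ 2). Then G admits a perfect assignment (every agent utility 1) if and only if H contains a complete bipartite subgraph K_{k,k} with k vertices in L and k vertices in R. -/
open Classical Finset

noncomputable section

variable {V A T : Type*}

lemma mem_occNbrs (G : SimpleGraph V) [Fintype A] (v : A ↪ V) (i j : A) :
    j ∈ occNbrs G v i ↔ G.Adj (v i) (v j) := by
  simp [occNbrs]

lemma util_eq_one_iff (G : SimpleGraph V) [Fintype A] (τ : A → T) (v : A ↪ V) (i : A) :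
    util G τ v i = 1 ↔ (occNbrs G v i).Nonempty ∧ ∀ j ∈ occNbrs G v i, τ j = τ i := by
  unfold util
  by_cases h : (occNbrs G v i).card = 0
  · rw [if_pos h]
    simp [Finset.card_eq_zero.mp h]
  · rw [if_neg h]
    have hQ : ((occNbrs G v i).card : ℚ) ≠ 0 := by exact_mod_cast h
    constructor
    · intro hdiv
      have hcard : ((occNbrs G v i).filter fun j => τ j = τ i).card = (occNbrs G v i).card := by
        have := (div_eq_one_iff_eq hQ).mp hdiv
        exact_mod_cast this
      have heq := Finset.eq_of_subset_of_card_le (Finset.filter_subset _ _) (le_of_eq hcard.symm)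
      refine ⟨Finset.card_pos.mp (Nat.pos_of_ne_zero h), fun j hj => ?_⟩
      rw [← heq] at hj
      exact (Finset.mem_filter.mp hj).2
    · rintro ⟨_, hall⟩
      rw [Finset.filter_eq_self.mpr hall]
      exact div_self hQ

theorem perfect_on_complement_iff_biclique
    {W A : Type*} [Fintype W] [Fintype A]
    (H : SimpleGraph W) (L R : Finset W)
    (hdisj : Disjoint L R) (hunion : L ∪ R = univ)
    (hbip : ∀ u w, H.Adj u w → ((u ∈ L ∧ w ∈ R) ∨ (u ∈ R ∧ w ∈ L)))
    (τ : A → Bool) (k : ℕ) (hk : 2 ≤ k)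
    (hred : (univ.filter (fun i => τ i = true)).card = k)
    (hblue : (univ.filter (fun i => τ i = false)).card = k) :
    (∃ v : A ↪ W, ∀ i, util Hᶜ τ v i = 1) ↔
      (∃ S T : Finset W, S ⊆ L ∧ T ⊆ R ∧ S.card = k ∧ T.card = k ∧
        ∀ a ∈ S, ∀ b ∈ T, H.Adj a b) := by
  classical
  have noedgeL : ∀ a b, a ∈ L → b ∈ L → ¬H.Adj a b := by
    intro a b ha hb hadj
    rcases hbip a b hadj with ⟨_, h2⟩ | ⟨h1, _⟩
    · exact (Finset.disjoint_left.mp hdisj hb) h2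
    · exact (Finset.disjoint_left.mp hdisj ha) h1
  have noedgeR : ∀ a b, a ∈ R → b ∈ R → ¬H.Adj a b := by
    intro a b ha hb hadj
    rcases hbip a b hadj with ⟨h1, _⟩ | ⟨_, h2⟩
    · exact (Finset.disjoint_left.mp hdisj h1) ha
    · exact (Finset.disjoint_left.mp hdisj h2) hb
  have hLR : ∀ w : W, w ∈ L ∨ w ∈ R := fun w =>
    Finset.mem_union.mp (hunion ▸ Finset.mem_univ w)
  constructor
  · rintro ⟨v, hv⟩
    have hv' := fun i => (util_eq_one_iff _ _ _ _).mp (hv i)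
    have hom : ∀ P : Finset W, (∀ a b, a ∈ P → b ∈ P → ¬H.Adj a b) →
        ∀ i j, v i ∈ P → v j ∈ P → τ j = τ i := by
      intro P hP i j hi hj
      by_cases hij : j = i
      · rw [hij]
      · have hadj : Hᶜ.Adj (v i) (v j) :=
          (SimpleGraph.compl_adj _ _ _).mpr ⟨fun h => hij (v.injective h).symm, hP _ _ hi hj⟩
        exact (hv' i).2 j ((mem_occNbrs _ _ _ _).mpr hadj)
    obtain ⟨i₀, hi₀⟩ : ∃ i, τ i = true := by
      have h0 : (univ.filter fun i => τ i = true).Nonempty := by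
        rw [← Finset.card_pos, hred]; omega
      obtain ⟨i, hi⟩ := h0; exact ⟨i, (Finset.mem_filter.mp hi).2⟩
    obtain ⟨j₀, hj₀⟩ : ∃ j, τ j = false := by
      have h0 : (univ.filter fun i => τ i = false).Nonempty := by
        rw [← Finset.card_pos, hblue]; omega
      obtain ⟨j, hj⟩ := h0; exact ⟨j, (Finset.mem_filter.mp hj).2⟩
    have main : ∀ iL iR : A, v iL ∈ L → v iR ∈ R → τ iL ≠ τ iR →
        ∃ S T : Finset W, S ⊆ L ∧ T ⊆ R ∧ S.card = k ∧ T.card = k ∧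
          ∀ a ∈ S, ∀ b ∈ T, H.Adj a b := by
      intro iL iR hLmem hRmem hne
      have hmemL : ∀ i, τ i = τ iL → v i ∈ L := by
        intro i hτ
        rcases hLR (v i) with h | h
        · exact h
        · exact absurd (hτ.symm.trans (hom R noedgeR iR i hRmem h)) hne
      have hmemR : ∀ i, τ i = τ iR → v i ∈ R := by
        intro i hτ
        rcases hLR (v i) with h | h
        · exact absurd (hτ.symm.trans (hom L noedgeL iL i hLmem h)) (Ne.symm hne)
        · exact h
      refine ⟨(univ.filter fun i => τ i = τ iL).image v,
        (univ.filter fun i => τ i = τ iR).image v, ?_, ?_, ?_, ?_, ?_⟩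
      · intro a ha
        obtain ⟨i, hi, rfl⟩ := Finset.mem_image.mp ha
        exact hmemL i (Finset.mem_filter.mp hi).2
      · intro a ha
        obtain ⟨i, hi, rfl⟩ := Finset.mem_image.mp ha
        exact hmemR i (Finset.mem_filter.mp hi).2
      · rw [Finset.card_image_of_injective _ v.injective]
        cases h : τ iL
        · exact hblue
        · exact hred
      · rw [Finset.card_image_of_injective _ v.injective]
        cases h : τ iR
        · exact hblue
        · exact hred
      · rintro a ha b hb
        obtain ⟨i, hi, rfl⟩ := Finset.mem_image.mp ha
        obtain ⟨j, hj, rfl⟩ := Finset.mem_image.mp hb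
        have hτi := (Finset.mem_filter.mp hi).2
        have hτj := (Finset.mem_filter.mp hj).2
        by_contra hnadj
        have hvne : v i ≠ v j := by
          intro h
          have hij := v.injective h
          rw [hij] at hτi
          exact hne (hτi.symm.trans hτj)
        have hadj : Hᶜ.Adj (v i) (v j) := (SimpleGraph.compl_adj _ _ _).mpr ⟨hvne, hnadj⟩
        have hsame := (hv' i).2 j ((mem_occNbrs _ _ _ _).mpr hadj)
        exact hne (hτi.symm.trans (hsame.symm.trans hτj))
    rcases hLR (v i₀) with h0 | h0 <;> rcases hLR (v j₀) with h1 | h1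
    · exact absurd (hom L noedgeL i₀ j₀ h0 h1) (by simp [hi₀, hj₀])
    · exact main i₀ j₀ h0 h1 (by simp [hi₀, hj₀])
    · exact main j₀ i₀ h1 h0 (by simp [hi₀, hj₀])
    · exact absurd (hom R noedgeR i₀ j₀ h0 h1) (by simp [hi₀, hj₀])
  · rintro ⟨S, T, hSL, hTR, hScard, hTcard, hST⟩
    have e1 : {x // x ∈ univ.filter fun i => τ i = true} ≃ {x // x ∈ S} :=
      Finset.equivOfCardEq (hred.trans hScard.symm)
    have e2 : {x // x ∈ univ.filter fun i => τ i = false} ≃ {x // x ∈ T} :=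
      Finset.equivOfCardEq (hblue.trans hTcard.symm)
    let f : A → W := fun i =>
      if h : τ i = true then (e1 ⟨i, Finset.mem_filter.mpr ⟨Finset.mem_univ _, h⟩⟩ : W)
      else (e2 ⟨i, Finset.mem_filter.mpr ⟨Finset.mem_univ _, Bool.eq_false_iff.mpr h⟩⟩ : W)
    have hfS : ∀ i, τ i = true → f i ∈ S := by
      intro i h
      simp only [f, dif_pos h]
      exact (e1 _).2
    have hfT : ∀ i, τ i = false → f i ∈ T := by
      intro i h
      have h' : ¬ τ i = true := by simp [h]
      simp only [f, dif_neg h']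
      exact (e2 _).2
    have hinj : Function.Injective f := by
      intro i j hij
      by_cases hi : τ i = true <;> by_cases hj : τ j = true
      · simp only [f, dif_pos hi, dif_pos hj] at hij
        have := e1.injective (Subtype.coe_injective hij)
        exact congrArg Subtype.val this
      · exfalso
        have h1 : f i ∈ L := hSL (hfS i hi)
        have h2 : f j ∈ R := hTR (hfT j (Bool.eq_false_iff.mpr hj))
        rw [hij] at h1
        exact Finset.disjoint_left.mp hdisj h1 h2
      · exfalso
        have h1 : f i ∈ R := hTR (hfT i (Bool.eq_false_iff.mpr hi))
        have h2 : f j ∈ L := hSL (hfS j hj)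
        rw [hij] at h1
        exact Finset.disjoint_left.mp hdisj h2 h1
      · simp only [f, dif_neg hi, dif_neg hj] at hij
        have := e2.injective (Subtype.coe_injective hij)
        exact congrArg Subtype.val this
    refine ⟨⟨f, hinj⟩, fun i => (util_eq_one_iff _ _ _ _).mpr ⟨?_, ?_⟩⟩
    · obtain ⟨j, hjne, hjτ⟩ : ∃ j, j ≠ i ∧ τ j = τ i := by
        have hcard : (univ.filter fun j => τ j = τ i).card = k := by
          cases h : τ i
          · exact hblue
          · exact hred
        have h2 : 1 < (univ.filter fun j => τ j = τ i).card := by omega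
        obtain ⟨a, ha, b, hb, hab⟩ := Finset.one_lt_card.mp h2
        by_cases hai : a = i
        · exact ⟨b, fun h => hab (hai.trans h.symm), (Finset.mem_filter.mp hb).2⟩
        · exact ⟨a, hai, (Finset.mem_filter.mp ha).2⟩
      refine ⟨j, (mem_occNbrs _ _ _ _).mpr ?_⟩
      have hne : f i ≠ f j := fun h => hjne (hinj h).symm
      refine (SimpleGraph.compl_adj _ _ _).mpr ⟨hne, ?_⟩
      cases h : τ i
      · exact noedgeR _ _ (hTR (hfT i h)) (hTR (hfT j (hjτ.trans h)))
      · exact noedgeL _ _ (hSL (hfS i h)) (hSL (hfS j (hjτ.trans h)))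
    · intro j hj
      have hadj : Hᶜ.Adj (f i) (f j) := (mem_occNbrs _ _ _ _).mp hj
      by_contra hτ
      cases h : τ i
      · have hjt : τ j = true := by
          cases h' : τ j
          · exact absurd (h'.trans h.symm) hτ
          · rfl
        have hH : H.Adj (f j) (f i) := hST _ (hfS j hjt) _ (hfT i h)
        exact ((SimpleGraph.compl_adj _ _ _).mp hadj).2 hH.symm
      · have hjf : τ j = false := by
          cases h' : τ j
          · rfl
          · exact absurd (h'.trans h.symm) hτ
        have hH : H.Adj (f i) (f j) := hST _ (hfS i h) _ (hfT j hjf)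
        exact ((SimpleGraph.compl_adj _ _ _).mp hadj).2 hH
end
end

section
/- In any perfect assignment of a two-type Schelling instance on the complement of a bipartite graph H = (L ∪ R, Y) with k ≥ 2 red and k ≥ 2 blue agents, all red agents occupy vertices of one part and all blue agents occupy vertices of the other part. -/
open Classical Finset

noncomputable section

variable {V A T : Type*}

theorem perfect_on_complement_separates_types
    {W A : Type*} [Fintype W] [Fintype A]
    (H : SimpleGraph W) (L R : Finset W)
    (hdisj : Disjoint L R) (hunion : L ∪ R = univ)
    (hbip : ∀ u w, H.Adj u w → ((u ∈ L ∧ w ∈ R) ∨ (u ∈ R ∧ w ∈ L)))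
    (τ : A → Bool) (k : ℕ) (hk : 2 ≤ k)
    (hred : (univ.filter (fun i => τ i = true)).card = k)
    (hblue : (univ.filter (fun i => τ i = false)).card = k)
    (v : A ↪ W) (hperf : ∀ i, util Hᶜ τ v i = 1) :
    (∀ i, (τ i = true → v i ∈ L) ∧ (τ i = false → v i ∈ R)) ∨
    (∀ i, (τ i = true → v i ∈ R) ∧ (τ i = false → v i ∈ L)) := by
  classical
  have hLR : ∀ w, w ∈ L → w ∈ R → False := fun w h1 h2 => Finset.disjoint_left.mp hdisj h1 h2
  have hmem : ∀ w : W, w ∈ L ∨ w ∈ R := fun w => by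
    have : w ∈ L ∪ R := by rw [hunion]; exact mem_univ w
    exact mem_union.mp this
  -- every occupied neighbor has same type
  have hsame : ∀ i j, Hᶜ.Adj (v i) (v j) → τ j = τ i := by
    intro i j hadj
    have h := hperf i
    unfold util at h
    split_ifs at h with h0
    · norm_num at h
    · have hc0 : ((occNbrs Hᶜ v i).card : ℚ) ≠ 0 := by exact_mod_cast h0
      rw [div_eq_one_iff_eq hc0] at h
      have hcard := (Nat.cast_injective (R := ℚ) h)
      rw [Finset.filter_congr_decidable] at hcard
      have heq := Finset.eq_of_subset_of_card_le (Finset.filter_subset _ _) hcard.ge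
      have hj : j ∈ occNbrs Hᶜ v i := by
        unfold occNbrs
        simp only [mem_filter, mem_univ, true_and]
        exact hadj
      rw [← heq] at hj
      exact (mem_filter.mp hj).2
  have hconf : ∀ i j, τ i ≠ τ j → v i ≠ v j → ¬ H.Adj (v i) (v j) → False := by
    intro i j hne hv hA
    exact hne (hsame i j ((SimpleGraph.compl_adj H _ _).mpr ⟨hv, hA⟩)).symm
  have hvne : ∀ i j : A, τ i ≠ τ j → v i ≠ v j := by
    intro i j hne
    exact v.injective.ne (fun h => hne (by rw [h]))
  have hsepL : ∀ i j, τ i ≠ τ j → v i ∈ L → v j ∈ R := by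
    intro i j hne hi
    rcases hmem (v j) with hj | hj
    · exact absurd (fun hA => by
        rcases hbip _ _ hA with ⟨h1, h2⟩ | ⟨h1, h2⟩
        · exact hLR _ hj h2
        · exact hLR _ hi h1) (fun h => hconf i j hne (hvne i j hne) h)
    · exact hj
  have hsepR : ∀ i j, τ i ≠ τ j → v i ∈ R → v j ∈ L := by
    intro i j hne hi
    rcases hmem (v j) with hj | hj
    · exact hj
    · exact absurd (fun hA => by
        rcases hbip _ _ hA with ⟨h1, h2⟩ | ⟨h1, h2⟩
        · exact hLR _ h1 hi
        · exact hLR _ h2 hj) (fun h => hconf i j hne (hvne i j hne) h)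
  obtain ⟨r, hr⟩ : ∃ r, τ r = true := by
    have : 0 < (univ.filter (fun i => τ i = true)).card := by omega
    obtain ⟨r, hr⟩ := card_pos.mp this
    exact ⟨r, (mem_filter.mp hr).2⟩
  obtain ⟨b, hb⟩ : ∃ b, τ b = false := by
    have : 0 < (univ.filter (fun i => τ i = false)).card := by omega
    obtain ⟨b, hb⟩ := card_pos.mp this
    exact ⟨b, (mem_filter.mp hb).2⟩
  rcases hmem (v r) with hrL | hrR
  · left
    intro i
    constructor
    · intro hti
      rcases hmem (v i) with h | h
      · exact h
      · exfalso
        rcases hmem (v b) with hbm | hbm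
        · exact hLR _ hbm (hsepL r b (by simp [hr, hb]) hrL)
        · exact hLR _ (hsepR i b (by simp [hti, hb]) h) hbm
    · intro hfi
      exact hsepL r i (by simp [hr, hfi]) hrL
  · right
    intro i
    constructor
    · intro hti
      rcases hmem (v i) with h | h
      · exfalso
        rcases hmem (v b) with hbm | hbm
        · exact hLR _ hbm (hsepL i b (by simp [hti, hb]) h)
        · exact hLR _ (hsepR r b (by simp [hr, hb]) hrR) hbm
      · exact h
    · intro hfi
      exact hsepR r i (by simp [hr, hfi]) hrR
end
end

section
/- Let (I, s, k, B) be a unary bin packing instance with all sizes s_i ≥ 2 and Σ_{i∈I} s_i = k·B. Construct a graph G as the disjoint union of connected graphs G_1, ..., G_{|I|} where G_i has s_i vertices, and consider the Schelling instance on G with k agent types, each having exactly B agents. Then G admits a perfect assignment if and only if the items can be partitioned into k sets I_1, ..., I_k with Σ_{i∈I_j} s_i = B for every j. -/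
open Classical Finset

noncomputable section

variable {V A T : Type*}

/-- walk constancy -/
lemma walk_const' {V β : Type*} {G : SimpleGraph V} (f : V → β)
    (h : ∀ a b, G.Adj a b → f a = f b) {u v : V} (w : G.Walk u v) : f u = f v := by
  induction w with
  | nil => rfl
  | cons h' p ih => exact (h _ _ h').trans ih

lemma exists_adj_of_walk {V : Type*} {G : SimpleGraph V} {u v : V} (h : u ≠ v)
    (w : G.Walk u v) : ∃ y, G.Adj u y := by
  cases w with
  | nil => exact absurd rfl h
  | cons h' _ => exact ⟨_, h'⟩

lemma card_filter_sigma' {I : Type*} [Fintype I] (s : I → ℕ) (k : ℕ) (P : I → Fin k) (j : Fin k) :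
    (univ.filter fun x : (Σ i : I, Fin (s i)) => P x.1 = j).card
      = ∑ i ∈ univ.filter (fun i => P i = j), s i := by
  have h : (univ.filter fun x : (Σ i : I, Fin (s i)) => P x.1 = j)
      = (univ.filter fun i => P i = j).sigma (fun i => univ) := by
    ext x; simp [Finset.mem_sigma]
  rw [h, Finset.card_sigma]
  simp

lemma util_one_iff {V A T : Type*} [Fintype A] {G : SimpleGraph V} {τ : A → T} {v : A ↪ V} {a : A}
    (h : util G τ v a = 1) :
    (occNbrs G v a).card ≠ 0 ∧ ∀ b ∈ occNbrs G v a, τ b = τ a := by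
  unfold util at h
  by_cases hc : (occNbrs G v a).card = 0
  · simp [hc] at h
  · refine ⟨hc, ?_⟩
    rw [if_neg hc, div_eq_one_iff_eq (by exact_mod_cast hc)] at h
    have hcard : (occNbrs G v a).card ≤ ((occNbrs G v a).filter fun j => τ j = τ a).card := by
      exact_mod_cast h.ge
    have h' : ((occNbrs G v a).filter fun j => τ j = τ a) = occNbrs G v a :=
      Finset.eq_of_subset_of_card_le (Finset.filter_subset _ _) hcard
    intro b hb
    rw [← h'] at hb
    exact (Finset.mem_filter.mp hb).2

theorem perfect_assignment_iff_bin_packing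
    {I : Type*} [Fintype I] (s : I → ℕ) (hs : ∀ i, 2 ≤ s i)
    (k B : ℕ) (hk : 1 ≤ k) (hB : 1 ≤ B)
    (hsum : ∑ i, s i = k * B)
    (G : SimpleGraph (Σ i : I, Fin (s i)))
    (hcomp : ∀ u w : (Σ i : I, Fin (s i)), G.Adj u w → u.1 = w.1)
    (hconn : ∀ i : I, (G.induce {x : (Σ i : I, Fin (s i)) | x.1 = i}).Connected) :
    (∃ v : (Fin k × Fin B) ↪ (Σ i : I, Fin (s i)),
        ∀ a, util G Prod.fst v a = 1) ↔
      (∃ P : I → Fin k, ∀ j : Fin k,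
        ∑ i ∈ univ.filter (fun i => P i = j), s i = B) := by
  have hcardV : Fintype.card (Σ i : I, Fin (s i)) = k * B := by
    simp [Fintype.card_sigma, hsum]
  have hcardA : Fintype.card (Fin k × Fin B) = Fintype.card (Σ i : I, Fin (s i)) := by
    simp [hcardV]
  have exnbr : ∀ x : (Σ i : I, Fin (s i)), ∃ y, G.Adj x y := by
    intro x
    haveI : Nontrivial (Fin (s x.1)) := Fin.nontrivial_iff_two_le.mpr (hs x.1)
    obtain ⟨b, hb⟩ := exists_ne x.2
    have hx : x ∈ {z : (Σ i : I, Fin (s i)) | z.1 = x.1} := rfl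
    have hy : (⟨x.1, b⟩ : Σ i : I, Fin (s i)) ∈ {z : (Σ i : I, Fin (s i)) | z.1 = x.1} := rfl
    obtain ⟨w⟩ := (hconn x.1).preconnected ⟨x, hx⟩ ⟨⟨x.1, b⟩, hy⟩
    have hne : (⟨x, hx⟩ : {z : (Σ i : I, Fin (s i)) | z.1 = x.1}) ≠ ⟨⟨x.1, b⟩, hy⟩ := by
      intro hcon
      apply hb
      have : x = (⟨x.1, b⟩ : Σ i : I, Fin (s i)) := congrArg Subtype.val hcon
      obtain ⟨i2, v2⟩ := x
      cases this
      rfl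
    obtain ⟨y, hy'⟩ := exists_adj_of_walk hne w
    exact ⟨y.val, hy'⟩
  constructor
  · rintro ⟨v, hv⟩
    have hbij : Function.Bijective v :=
      (Fintype.bijective_iff_injective_and_card v).mpr ⟨v.injective, hcardA⟩
    set e := Equiv.ofBijective v hbij with he
    set c : (Σ i : I, Fin (s i)) → Fin k := fun x => (e.symm x).1 with hcdef
    have hadj : ∀ x y, G.Adj x y → c x = c y := by
      intro x y hxy
      have hx : v (e.symm x) = x := e.apply_symm_apply x
      have hy : v (e.symm y) = y := e.apply_symm_apply y
      obtain ⟨hne, hall⟩ := util_one_iff (hv (e.symm x))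
      have hb : e.symm y ∈ occNbrs G v (e.symm x) := by
        simp only [occNbrs, Finset.mem_filter, Finset.mem_univ, true_and, hx, hy]
        exact hxy
      exact (hall _ hb).symm
    have hcomp' : ∀ x y : (Σ i : I, Fin (s i)), x.1 = y.1 → c x = c y := by
      intro x y hxy
      obtain ⟨w⟩ := (hconn x.1).preconnected ⟨x, rfl⟩ ⟨y, hxy.symm⟩
      exact walk_const' (fun z => c z.val) (fun a b hab => hadj _ _ hab) w
    set P : I → Fin k := fun i => c ⟨i, ⟨0, lt_of_lt_of_le (by norm_num) (hs i)⟩⟩ with hPdef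
    have hPx : ∀ x : (Σ i : I, Fin (s i)), c x = P x.1 := fun x => hcomp' x ⟨x.1, _⟩ rfl
    refine ⟨P, ?_⟩
    intro j
    rw [← card_filter_sigma' s k P j]
    have key : (univ.filter fun x : (Σ i : I, Fin (s i)) => P x.1 = j)
        = (univ.filter fun a : Fin k × Fin B => a.1 = j).image e := by
      ext x
      simp only [Finset.mem_image, Finset.mem_filter, Finset.mem_univ, true_and]
      constructor
      · intro hx
        refine ⟨e.symm x, ?_, e.apply_symm_apply x⟩
        have : c x = j := (hPx x).trans hx
        exact this
      · rintro ⟨a, ha, rfl⟩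
        have h1 : c (e a) = a.1 := by simp [hcdef]
        rw [← hPx (e a), h1]
        exact ha
    rw [key, Finset.card_image_of_injective _ e.injective]
    have hps : (univ.filter fun a : Fin k × Fin B => a.1 = j) = {j} ×ˢ univ := by
      ext a; simp [Finset.mem_product, Prod.ext_iff, eq_comm]
    rw [hps, Finset.card_product]
    simp
  · rintro ⟨P, hP⟩
    have hcard : ∀ j, Fintype.card {x : (Σ i : I, Fin (s i)) // P x.1 = j} = B := by
      intro j
      rw [Fintype.card_subtype, card_filter_sigma' s k P j, hP j]
    set e : ∀ j : Fin k, Fin B ≃ {x : (Σ i : I, Fin (s i)) // P x.1 = j} :=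
      fun j => Fintype.equivOfCardEq (by rw [hcard j, Fintype.card_fin]) with hedef
    set f : Fin k × Fin B → (Σ i : I, Fin (s i)) := fun a => (e a.1 a.2).val with hfdef
    have hf1 : ∀ a, P (f a).1 = a.1 := fun a => (e a.1 a.2).property
    have hinj : Function.Injective f := by
      rintro ⟨j, b⟩ ⟨j', b'⟩ h
      have h1 := hf1 (j, b)
      have h2 := hf1 (j', b')
      rw [h] at h1
      have hj : j = j' := h1.symm.trans h2
      subst hj
      have hb : e j b = e j b' := Subtype.val_injective h
      have := (e j).injective hb
      rw [this]
    have hbij : Function.Bijective f :=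
      (Fintype.bijective_iff_injective_and_card f).mpr ⟨hinj, hcardA⟩
    refine ⟨⟨f, hinj⟩, ?_⟩
    intro a
    obtain ⟨y, hy⟩ := exnbr (f a)
    obtain ⟨b, hb⟩ := hbij.2 y
    have hmem : b ∈ occNbrs G ⟨f, hinj⟩ a := by
      simp only [occNbrs, Finset.mem_filter, Finset.mem_univ, true_and]
      show G.Adj (f a) (f b)
      rw [hb]; exact hy
    have hcne : (occNbrs G ⟨f, hinj⟩ a).card ≠ 0 :=
      Finset.card_ne_zero_of_mem hmem
    have hall : ∀ x ∈ occNbrs G ⟨f, hinj⟩ a, x.1 = a.1 := by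
      intro x hx
      have hadj : G.Adj (f a) (f x) := by
        have := (Finset.mem_filter.mp hx).2
        exact this
      have h1 := hcomp _ _ hadj
      calc x.1 = P (f x).1 := (hf1 x).symm
        _ = P (f a).1 := by rw [h1]
        _ = a.1 := hf1 a
    unfold util
    rw [if_neg hcne, div_eq_one_iff_eq (Nat.cast_ne_zero.mpr hcne), Nat.cast_inj]
    congr 1
    ext x
    simp only [Finset.mem_filter, and_iff_left_iff_imp]
    exact hall x
end
end

section
/- Let G be a graph with maximum degree Δ whose largest connected component C_1 satisfies |C_1| ≥ (Δ+1)·r·(1 + Δ·b), and let X ⊆ C_1 be any connected set of r vertices. Then the graph induced on C_1 \ N[X] (where N[X] is the closed neighborhood of X) has a connected component with at least b vertices. -/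
open Classical Finset

noncomputable section

variable {V A T : Type*}

def closedNbhd {V : Type*} [Fintype V] (G : SimpleGraph V) (X : Finset V) : Finset V :=
  X ∪ univ.filter fun y => ∃ x ∈ X, G.Adj x y

theorem large_component_remainder_has_big_component
    {V : Type*} [Fintype V] (G : SimpleGraph V) (Δ r b : ℕ)
    (hΔ : 1 ≤ Δ) (hr : 1 ≤ r) (hb : 1 ≤ b)
    (hdeg : ∀ x : V, G.degree x ≤ Δ)
    (C1 : Finset V)
    (hC1conn : (G.induce (C1 : Set V)).Connected)
    (hC1closed : ∀ x ∈ C1, ∀ y : V, G.Adj x y → y ∈ C1)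
    (hsize : (Δ + 1) * r * (1 + Δ * b) ≤ C1.card)
    (X : Finset V) (hX : X ⊆ C1)
    (hXconn : (G.induce (X : Set V)).Connected)
    (hXcard : X.card = r) :
    ∃ S : Finset V, (S : Set V) ⊆ (C1 : Set V) \ (closedNbhd G X : Set V) ∧
      (G.induce (S : Set V)).Connected ∧ b ≤ S.card := by
  classical
  set N : Finset V := closedNbhd G X with hNdef
  set R : Finset V := C1 \ N with hRdef
  -- cardinality of N
  have hNcard : N.card ≤ (Δ + 1) * r := by
    have hsub : N ⊆ X ∪ X.biUnion (fun w => G.neighborFinset w) := by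
      intro y hy
      rw [hNdef, closedNbhd, Finset.mem_union] at hy
      rcases hy with hy | hy
      · exact Finset.mem_union_left _ hy
      · rw [Finset.mem_filter] at hy
        obtain ⟨x, hx, hadj⟩ := hy.2
        exact Finset.mem_union_right _ (Finset.mem_biUnion.mpr ⟨x, hx, by
          rw [SimpleGraph.mem_neighborFinset]; exact hadj⟩)
    calc N.card ≤ (X ∪ X.biUnion (fun w => G.neighborFinset w)).card := Finset.card_le_card hsub
      _ ≤ X.card + (X.biUnion (fun w => G.neighborFinset w)).card := Finset.card_union_le _ _
      _ ≤ X.card + ∑ x ∈ X, (G.neighborFinset x).card := by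
          gcongr; exact Finset.card_biUnion_le
      _ ≤ r + ∑ x ∈ X, Δ := by
          rw [hXcard]; gcongr with x hx
          exact hdeg x
      _ = r + r * Δ := by rw [Finset.sum_const, hXcard, smul_eq_mul]
      _ = (Δ + 1) * r := by ring
  -- cardinality of R
  have hRcard : (Δ + 1) * r * Δ * b ≤ R.card := by
    have h1 : C1.card - N.card ≤ R.card := Finset.le_card_sdiff _ _
    have h2 : (Δ + 1) * r * (1 + Δ * b) - (Δ + 1) * r ≤ C1.card - N.card := by
      omega
    have h3 : (Δ + 1) * r * (1 + Δ * b) - (Δ + 1) * r = (Δ + 1) * r * Δ * b := by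
      have : (Δ + 1) * r * (1 + Δ * b) = (Δ + 1) * r + (Δ + 1) * r * Δ * b := by ring
      omega
    omega
  have hRC1 : ∀ u ∈ R, u ∈ C1 := fun u hu => (Finset.mem_sdiff.mp hu).1
  have hRN : ∀ u ∈ R, u ∉ N := fun u hu => (Finset.mem_sdiff.mp hu).2
  -- the induced graph
  set H : SimpleGraph (R : Set V) := G.induce (R : Set V) with hHdef
  have hmemR : ∀ u : V, u ∈ (R : Set V) ↔ u ∈ R := fun u => Finset.mem_coe
  -- key: every vertex of R can reach (within H) a vertex adjacent to N
  have hXne : X.Nonempty := Finset.card_pos.mp (by omega)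
  obtain ⟨x0, hx0⟩ := hXne
  have hx0C1 : x0 ∈ C1 := hX hx0
  have hx0N : x0 ∈ N := by
    rw [hNdef, closedNbhd]; exact Finset.mem_union_left _ hx0
  have aux1 : ∀ (a b : (C1 : Set V)) (p : (G.induce (C1 : Set V)).Walk a b),
      ∀ (ha : (a : V) ∈ R), (b : V) ∈ N →
      ∃ (u' : V) (hu' : u' ∈ R), H.Reachable ⟨(a : V), (hmemR _).mpr ha⟩ ⟨u', (hmemR _).mpr hu'⟩ ∧
        ∃ w ∈ N, G.Adj w u' := by
    intro a b p
    induction p with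
    | nil => intro ha hb; exact absurd hb (hRN _ ha)
    | @cons u v w h p ih =>
      intro ha hb
      by_cases hvN : (v : V) ∈ N
      · refine ⟨(u : V), ha, SimpleGraph.Reachable.refl _, (v : V), hvN, ?_⟩
        exact (SimpleGraph.comap_adj.mp h).symm
      · have hvR : (v : V) ∈ R := Finset.mem_sdiff.mpr ⟨v.2, hvN⟩
        obtain ⟨u', hu', hreach, hw⟩ := ih hvR hb
        refine ⟨u', hu', SimpleGraph.Reachable.trans ?_ hreach, hw⟩
        exact SimpleGraph.Adj.reachable (by exact h)
  have key : ∀ (u : V) (hu : u ∈ R), ∃ (u' : V) (hu' : u' ∈ R),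
      H.Reachable ⟨u, (hmemR _).mpr hu⟩ ⟨u', (hmemR _).mpr hu'⟩ ∧ ∃ w ∈ N, G.Adj w u' := by
    intro u hu
    have : (G.induce (C1 : Set V)).Reachable ⟨u, hRC1 u hu⟩ ⟨x0, hx0C1⟩ :=
      hC1conn.preconnected _ _
    obtain ⟨p⟩ := this
    exact aux1 _ _ p hu hx0N
  -- components
  have compcard : Fintype.card H.ConnectedComponent ≤ (Δ + 1) * r * Δ := by
    -- injection into boundary vertices
    have hpick : ∀ c : H.ConnectedComponent, ∃ u' : V, ∃ hu' : u' ∈ R,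
        H.connectedComponentMk ⟨u', (hmemR _).mpr hu'⟩ = c ∧ ∃ w ∈ N, G.Adj w u' := by
      intro c
      obtain ⟨a, ha⟩ := c.exists_rep
      obtain ⟨u', hu', hreach, hw⟩ := key (a : V) ((hmemR _).mp a.2)
      refine ⟨u', hu', ?_, hw⟩
      rw [← ha]
      exact SimpleGraph.ConnectedComponent.sound hreach.symm
    choose f hf1 hf2 hf3 using hpick
    have hinj : Function.Injective f := by
      intro c1 c2 h
      rw [← hf2 c1, ← hf2 c2]
      congr 1
      exact Subtype.ext h
    have hfA : ∀ c, f c ∈ N.biUnion (fun w => G.neighborFinset w) := by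
      intro c
      obtain ⟨w, hwN, hadj⟩ := hf3 c
      exact Finset.mem_biUnion.mpr ⟨w, hwN, (SimpleGraph.mem_neighborFinset _ _ _).mpr hadj⟩
    calc Fintype.card H.ConnectedComponent ≤ (N.biUnion (fun w => G.neighborFinset w)).card := by
          have := Finset.card_le_card_of_injOn (s := (univ : Finset H.ConnectedComponent))
            (t := N.biUnion (fun w => G.neighborFinset w)) f (fun c _ => hfA c)
            (fun c1 _ c2 _ h => hinj h)
          rwa [Finset.card_univ] at this
      _ ≤ ∑ w ∈ N, (G.neighborFinset w).card := Finset.card_biUnion_le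
      _ ≤ ∑ w ∈ N, Δ := by
          gcongr with w hw
          exact hdeg w
      _ = N.card * Δ := by rw [Finset.sum_const, smul_eq_mul]
      _ ≤ (Δ + 1) * r * Δ := by gcongr
  -- pigeonhole
  have hsum : ∑ c : H.ConnectedComponent,
      (univ.filter fun u : (R : Set V) => H.connectedComponentMk u = c).card
      = R.card := by
    have h1 : (univ : Finset (R : Set V)).card = ∑ c : H.ConnectedComponent,
        (univ.filter fun u : (R : Set V) => H.connectedComponentMk u = c).card :=
      Finset.card_eq_sum_card_fiberwise (fun u _ => Finset.mem_univ _)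
    rw [← h1, Finset.card_univ]
    simp
  have hex : ∃ c : H.ConnectedComponent,
      b ≤ (univ.filter fun u : (R : Set V) => H.connectedComponentMk u = c).card := by
    by_contra hcon
    push_neg at hcon
    have : R.card ≤ Fintype.card H.ConnectedComponent * (b - 1) := by
      rw [← hsum]
      calc ∑ c : H.ConnectedComponent, (univ.filter fun u : (R : Set V) =>
            H.connectedComponentMk u = c).card
          ≤ ∑ _c : H.ConnectedComponent, (b - 1) := by
            apply Finset.sum_le_sum; intro c _; have := hcon c; omega
        _ = Fintype.card H.ConnectedComponent * (b - 1) := by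
            rw [Finset.sum_const, smul_eq_mul, Finset.card_univ]
    have h1 : Fintype.card H.ConnectedComponent * (b - 1) ≤ (Δ + 1) * r * Δ * (b - 1) := by
      exact Nat.mul_le_mul_right _ compcard
    have h2 : (Δ + 1) * r * Δ * (b - 1) < (Δ + 1) * r * Δ * b :=
      mul_lt_mul_of_pos_left (show b - 1 < b by omega)
        (show 0 < (Δ + 1) * r * Δ by positivity)
    omega
  obtain ⟨c, hc⟩ := hex
  set F : Finset (R : Set V) := univ.filter (fun u : (R : Set V) =>
    H.connectedComponentMk u = c) with hFdef
  set S : Finset V := F.image Subtype.val with hSdef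
  have hScard : S.card = F.card := Finset.card_image_of_injective _ Subtype.val_injective
  have hmemS : ∀ u : (R : Set V), H.connectedComponentMk u = c → (u : V) ∈ (S : Set V) :=
    fun u hu => Finset.mem_coe.mpr (Finset.mem_image.mpr
      ⟨u, Finset.mem_filter.mpr ⟨Finset.mem_univ _, hu⟩, rfl⟩)
  refine ⟨S, ?_, ?_, ?_⟩
  · intro y hy
    obtain ⟨u, huF, rfl⟩ := Finset.mem_image.mp (Finset.mem_coe.mp hy)
    have huR : (u : V) ∈ R := (hmemR _).mp u.2
    have huR2 : (u : V) ∈ C1 \ N := huR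
    rw [Finset.mem_sdiff] at huR2
    exact ⟨huR2.1, by simpa using huR2.2⟩
  · -- connectivity
    have aux2 : ∀ (a b' : (R : Set V)) (p : H.Walk a b') (ha : H.connectedComponentMk a = c),
        ∀ (hx : (a : V) ∈ (S : Set V)) (hy : (b' : V) ∈ (S : Set V)),
        (G.induce (S : Set V)).Reachable ⟨(a : V), hx⟩ ⟨(b' : V), hy⟩ := by
      intro a b' p
      induction p with
      | nil => intro _ hx hy; exact SimpleGraph.Reachable.refl _
      | @cons u v w h p ih =>
        intro ha hx hy
        have hvc : H.connectedComponentMk v = c := by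
          rw [← ha]; exact (SimpleGraph.ConnectedComponent.connectedComponentMk_eq_of_adj h).symm
        have hvS : (v : V) ∈ (S : Set V) := hmemS v hvc
        refine SimpleGraph.Reachable.trans ?_ (ih hvc hvS hy)
        exact SimpleGraph.Adj.reachable (by exact h)
    rw [SimpleGraph.connected_iff]
    constructor
    · -- Preconnected
      intro y z
      obtain ⟨uy, huyF, huy⟩ := Finset.mem_image.mp (Finset.mem_coe.mp y.2)
      obtain ⟨uz, huzF, huz⟩ := Finset.mem_image.mp (Finset.mem_coe.mp z.2)
      have hcy : H.connectedComponentMk uy = c := (Finset.mem_filter.mp huyF).2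
      have hcz : H.connectedComponentMk uz = c := (Finset.mem_filter.mp huzF).2
      have hreach : H.Reachable uy uz := by
        rw [← SimpleGraph.ConnectedComponent.eq, hcy, hcz]
      obtain ⟨p⟩ := hreach
      have hthis := aux2 uy uz p hcy (hmemS uy hcy) (hmemS uz hcz)
      have hy' : y = ⟨(uy : V), hmemS uy hcy⟩ := Subtype.ext huy.symm
      have hz' : z = ⟨(uz : V), hmemS uz hcz⟩ := Subtype.ext huz.symm
      rw [hy', hz']
      exact hthis
    · -- Nonempty
      have hpos : 0 < S.card := by omega
      obtain ⟨y, hy⟩ := Finset.card_pos.mp hpos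
      exact ⟨⟨y, Finset.mem_coe.mpr hy⟩⟩
  · omega
end
end

section
/- Let G have connected components C_1, ..., C_k ordered by non-increasing size, and consider a two-type Schelling instance with r red and b blue agents (r + b ≤ |V|). Then there exists a welfare-optimal assignment that places agents only on the r + b largest components C_1, ..., C_{r+b}. -/
open Classical Finset

noncomputable section

variable {V A T : Type*}

lemma util_nonneg (G : SimpleGraph V) [Fintype A] (τ : A → T) (v : A ↪ V) (i : A) :
    0 ≤ util G τ v i := by
  unfold util; split
  · exact le_refl 0
  · positivity

lemma util_le_one (G : SimpleGraph V) [Fintype A] (τ : A → T) (v : A ↪ V) (i : A) :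
    util G τ v i ≤ 1 := by
  unfold util; split
  · exact zero_le_one
  · rename_i h
    apply div_le_one_of_le₀
    · exact_mod_cast Nat.cast_le.mpr (Finset.card_filter_le _ _)
    · positivity

lemma util_eq_one (G : SimpleGraph V) [Fintype A] (τ : A → T) (v : A ↪ V) (i : A)
    (hne : (occNbrs G v i).Nonempty) (h : ∀ j ∈ occNbrs G v i, τ j = τ i) :
    util G τ v i = 1 := by
  unfold util
  rw [if_neg (by simpa [← Finset.card_pos] using hne.card_pos.ne'),
    Finset.filter_true_of_mem h, div_self]
  have := hne.card_pos
  positivity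

lemma util_eq_zero (G : SimpleGraph V) [Fintype A] (τ : A → T) (v : A ↪ V) (i : A)
    (h : ∀ j ∈ occNbrs G v i, τ j ≠ τ i) : util G τ v i = 0 := by
  unfold util; split
  · rfl
  · rw [Finset.filter_false_of_mem h]; simp

lemma util_mono (G : SimpleGraph V) [Fintype A] (τ : A → T) (v v' : A ↪ V) (i : A)
    (hsub : occNbrs G v' i ⊆ occNbrs G v i)
    (hsame : ∀ j ∈ occNbrs G v i, τ j = τ i → j ∈ occNbrs G v' i) :
    util G τ v i ≤ util G τ v' i := by
  have h1 : (occNbrs G v i).filter (fun j => τ j = τ i)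
      = (occNbrs G v' i).filter (fun j => τ j = τ i) := by
    apply Finset.Subset.antisymm
    · intro j hj
      obtain ⟨h1, h2⟩ := Finset.mem_filter.mp hj
      exact Finset.mem_filter.mpr ⟨hsame _ h1 h2, h2⟩
    · intro j hj
      obtain ⟨h1, h2⟩ := Finset.mem_filter.mp hj
      exact Finset.mem_filter.mpr ⟨hsub h1, h2⟩
  unfold util
  split
  · split
    · exact le_refl 0
    · positivity
  · rename_i hc
    split
    · rename_i hc'
      have he' : occNbrs G v' i = ∅ := Finset.card_eq_zero.mp hc'
      have : (occNbrs G v i).filter (fun j => τ j = τ i) = ∅ := by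
        rw [h1, he']; exact Finset.filter_empty _
      rw [this]
      simp
    · rename_i hc'
      rw [h1]
      have hpos : (0:ℚ) < ((occNbrs G v' i).card : ℚ) := by positivity
      have hle : ((occNbrs G v' i).card : ℚ) ≤ ((occNbrs G v i).card : ℚ) :=
        Nat.cast_le.mpr (Finset.card_le_card hsub)
      exact div_le_div_of_nonneg_left (by positivity) hpos hle

lemma util_congr (G : SimpleGraph V) [Fintype A] (τ : A → T) (v v' : A ↪ V) (i : A)
    (h : occNbrs G v' i = occNbrs G v i) : util G τ v i = util G τ v' i :=
  le_antisymm (util_mono G τ v v' i h.le (fun j hj _ => h.ge hj))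
    (util_mono G τ v' v i h.ge (fun j hj _ => h.le hj))

lemma crossing {V : Type*} (G : SimpleGraph V) (P : Finset V)
    (hconn : (G.induce (P : Set V)).Connected) (T : Finset V) (hTP : T ⊆ P)
    (hT : T.Nonempty) (hlt : T.card < P.card) :
    ∃ x ∈ T, ∃ y ∈ P, y ∉ T ∧ G.Adj x y := by
  obtain ⟨u, hu⟩ := hT
  have hssub : T ⊂ P := hTP.ssubset_of_ne (fun h => absurd (congrArg Finset.card h) hlt.ne)
  obtain ⟨w, hwP, hwT⟩ := Finset.exists_of_ssubset hssub
  obtain ⟨p⟩ := hconn.preconnected ⟨u, hTP hu⟩ ⟨w, hwP⟩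
  obtain ⟨d, _, hd1, hd2⟩ := p.exists_boundary_dart {z : (P : Set V) | z.val ∈ T}
    (by simpa using hu) (by simpa using hwT)
  exact ⟨d.fst.val, hd1, d.snd.val, d.snd.property, hd2, d.adj⟩

lemma exists_nbr_subset {V : Type*} (G : SimpleGraph V) (P : Finset V)
    (hconn : (G.induce (P : Set V)).Connected) (s : ℕ) (h1 : 1 ≤ s) (hs : s ≤ P.card) :
    ∃ T ⊆ P, T.card = s ∧ (T.card ≤ 1 ∨ ∀ x ∈ T, ∃ y ∈ T, G.Adj x y) := by
  induction s, h1 using Nat.le_induction with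
  | base =>
    obtain ⟨a, ha⟩ := Finset.card_pos.mp (lt_of_lt_of_le one_pos hs)
    exact ⟨{a}, by simpa using ha, by simp, Or.inl (by simp)⟩
  | succ k hk ih =>
    obtain ⟨T, hTP, hcard, hprop⟩ := ih (le_trans (Nat.le_succ k) hs)
    have hTne : T.Nonempty := Finset.card_pos.mp (hcard ▸ hk)
    have hlt : T.card < P.card := hcard ▸ hs
    obtain ⟨x, hxT, y, hyP, hyT, hadj⟩ := crossing G P hconn T hTP hTne hlt
    refine ⟨insert y T, Finset.insert_subset hyP hTP,
      by rw [Finset.card_insert_of_notMem hyT, hcard], Or.inr ?_⟩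
    intro z hz
    rcases Finset.mem_insert.mp hz with rfl | hzT
    · exact ⟨x, Finset.mem_insert_of_mem hxT, hadj.symm⟩
    · rcases hprop with h1 | hp
      · have hzx : z = x := Finset.card_le_one.mp h1 z hzT x hxT
        exact ⟨y, Finset.mem_insert_self _ _, hzx ▸ hadj⟩
      · obtain ⟨w, hwT, hw⟩ := hp z hzT
        exact ⟨w, Finset.mem_insert_of_mem hwT, hw⟩

lemma move_lemma {V A : Type*} [Fintype V] [Fintype A]
    (G : SimpleGraph V) (τ : A → Bool) (n m : ℕ)
    (hA : Fintype.card A ≤ n)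
    (C : Fin m → Finset V)
    (hconn : ∀ j, (G.induce ((C j) : Set V)).Connected)
    (hclosed : ∀ j, ∀ x ∈ C j, ∀ y : V, G.Adj x y → y ∈ C j)
    (hdisj : ∀ j j' : Fin m, j ≠ j' → Disjoint (C j) (C j'))
    (hcover : ∀ x : V, ∃ j, x ∈ C j)
    (hsorted : ∀ j j' : Fin m, j ≤ j' → (C j').card ≤ (C j).card)
    (v : A ↪ V) (i0 : A) (q : Fin m) (hq : ¬((q:ℕ) < n)) (hvq : v i0 ∈ C q) :
    ∃ v' : A ↪ V, SW G τ v ≤ SW G τ v' ∧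
      (univ.filter fun i : A => ∃ j : Fin m, ¬((j:ℕ) < n) ∧ v' i ∈ C j) ⊂
      (univ.filter fun i : A => ∃ j : Fin m, ¬((j:ℕ) < n) ∧ v i ∈ C j) := by
  classical
  have huniq : ∀ (x : V) (j j' : Fin m), x ∈ C j → x ∈ C j' → j = j' := by
    intro x j j' hj hj'
    by_contra hne
    exact Finset.disjoint_left.mp (hdisj j j' hne) hj hj'
  set t := τ i0 with ht
  set S : Finset A := univ.filter (fun i => v i ∈ C q ∧ τ i = t) with hS
  have hi0S : i0 ∈ S := by simp [hS, hvq, ht]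
  have hs1 : 1 ≤ S.card := Finset.card_pos.mpr ⟨i0, hi0S⟩
  have hsq : S.card ≤ (C q).card := by
    rw [← Finset.card_image_of_injective S v.injective]
    apply Finset.card_le_card
    intro x hx
    obtain ⟨i, hi, rfl⟩ := Finset.mem_image.mp hx
    exact ((Finset.mem_filter.mp hi).2).1
  have hnq : n ≤ (q : ℕ) := not_lt.mp hq
  have hnm : n ≤ m := le_trans hnq (le_of_lt q.isLt)
  set low : Finset (Fin m) := univ.filter (fun j : Fin m => (j:ℕ) < n) with hlowdef
  have hlow : low.card = n := by
    rw [Finset.card_eq_of_bijective (fun k hk => ⟨k, lt_of_lt_of_le hk hnm⟩)]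
    · intro j hj
      have hjn : (j : ℕ) < n := (Finset.mem_filter.mp hj).2
      exact ⟨j, hjn, rfl⟩
    · intro k hk; simp [hlowdef, hk]
    · intro k k' hk hk' h
      simpa using congrArg Fin.val h
  set Occ : Finset (Fin m) := univ.filter (fun j : Fin m => ∃ i, v i ∈ C j) with hOccdef
  have hOccA : ∀ j ∈ Occ, ∃ i : A, v i ∈ C j := fun j hj => (Finset.mem_filter.mp hj).2
  have hOcc : Occ.card ≤ Fintype.card A := by
    calc Occ.card ≤ (univ : Finset A).card := by
          apply Finset.card_le_card_of_injOn
            (fun j => if h : j ∈ Occ then (hOccA j h).choose else i0)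
          · intro a _; exact Finset.mem_univ _
          · intro j hj j' hj' heq
            simp only [Finset.mem_coe] at hj hj'
            simp only [dif_pos hj, dif_pos hj'] at heq
            have h1 := (hOccA j hj).choose_spec
            have h2 := (hOccA j' hj').choose_spec
            rw [heq] at h1
            exact huniq _ _ _ h1 h2
      _ = Fintype.card A := Finset.card_univ
  have hqOcc : q ∈ Occ := Finset.mem_filter.mpr ⟨Finset.mem_univ _, ⟨i0, hvq⟩⟩
  have hqlow : q ∉ low := by simp [hlowdef, hq]
  have hex : (low \ Occ).Nonempty := by
    rw [← Finset.card_pos]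
    by_contra h
    push_neg at h
    have hsub : low ⊆ Occ := by
      intro x hx
      by_contra hxO
      exact absurd (Finset.card_pos.mpr ⟨x, Finset.mem_sdiff.mpr ⟨hx, hxO⟩⟩) (by omega)
    have h2 : insert q low ⊆ Occ := Finset.insert_subset hqOcc hsub
    have h3 := Finset.card_le_card h2
    rw [Finset.card_insert_of_notMem hqlow, hlow] at h3
    omega
  obtain ⟨p, hpmem⟩ := hex
  have hplow : (p : ℕ) < n := (Finset.mem_filter.mp (Finset.mem_sdiff.mp hpmem).1).2
  have hpunocc : ∀ i : A, v i ∉ C p := by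
    have h4 := (Finset.mem_sdiff.mp hpmem).2
    simp only [hOccdef, Finset.mem_filter, Finset.mem_univ, true_and, not_exists] at h4
    exact h4
  have hpq : p ≤ q := by
    apply Fin.le_def.mpr; omega
  have hpqne : p ≠ q := fun h => hqlow (h ▸ (Finset.mem_sdiff.mp hpmem).1)
  have hsp : S.card ≤ (C p).card := hsq.trans (hsorted p q hpq)
  obtain ⟨T, hTP, hTcard, hTprop⟩ := exists_nbr_subset G (C p) (hconn p) S.card hs1 hsp
  set e : {x // x ∈ S} ≃ {x // x ∈ T} := Finset.equivOfCardEq (hTcard.symm) with he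
  set f : A → V := fun i => if h : i ∈ S then (e ⟨i, h⟩ : V) else v i with hf
  have hfS : ∀ i (h : i ∈ S), f i ∈ T := fun i h => by
    simp only [hf, dif_pos h]; exact (e ⟨i, h⟩).2
  have hfSp : ∀ i, (h : i ∈ S) → f i ∈ C p := fun i h => hTP (hfS i h)
  have hfnS : ∀ i, i ∉ S → f i = v i := fun i h => by simp only [hf, dif_neg h]
  have hinj : Function.Injective f := by
    intro i j hij
    by_cases hi : i ∈ S <;> by_cases hj : j ∈ S
    · simp only [hf, dif_pos hi, dif_pos hj] at hij
      have := e.injective (Subtype.ext hij)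
      simpa using this
    · exact absurd ((hfnS j hj) ▸ hij ▸ hfSp i hi) (hpunocc j)
    · exact absurd (((hfnS i hi) ▸ hij) ▸ hfSp j hj) (hpunocc i)
    · exact v.injective ((hfnS i hi) ▸ (hfnS j hj) ▸ hij)
  refine ⟨⟨f, hinj⟩, ?_, ?_⟩
  · -- social welfare comparison
    set v' : A ↪ V := ⟨f, hinj⟩ with hv'
    have hv'app : ∀ i, v' i = f i := fun i => rfl
    have hoccp : ∀ j : A, v' j ∈ C p → j ∈ S := by
      intro j hj
      by_contra hjS
      rw [hv'app, hfnS j hjS] at hj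
      exact hpunocc j hj
    have hkey : ∀ i, util G τ v i ≤ util G τ v' i := by
      intro i
      by_cases hiS : i ∈ S
      · have hτi : τ i = t := ((Finset.mem_filter.mp hiS).2).2
        have hallS : ∀ j ∈ occNbrs G v' i, τ j = τ i := by
          intro j hj
          have hadj : G.Adj (v' i) (v' j) := (Finset.mem_filter.mp hj).2
          have hjp : v' j ∈ C p := hclosed p _ (hfSp i hiS) _ hadj
          have hjS : j ∈ S := hoccp j hjp
          rw [((Finset.mem_filter.mp hjS).2).2, hτi]
        by_cases h2 : 2 ≤ S.card
        · have hTnbr : ∀ x ∈ T, ∃ y ∈ T, G.Adj x y := by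
            rcases hTprop with h | h
            · omega
            · exact h
          obtain ⟨y, hyT, hadj⟩ := hTnbr (f i) (hfS i hiS)
          obtain ⟨⟨j, hjS⟩, hj⟩ := e.surjective ⟨y, hyT⟩
          have hyj : v' j = y := by
            rw [hv'app j, hf]; simp only [dif_pos hjS, hj]
          have hadj' : G.Adj (v' i) (v' j) := by rw [hyj]; exact hadj
          have hmem : j ∈ occNbrs G v' i :=
            Finset.mem_filter.mpr ⟨Finset.mem_univ _, hadj'⟩
          calc util G τ v i ≤ 1 := util_le_one G τ v i
            _ = util G τ v' i := (util_eq_one G τ v' i ⟨j, hmem⟩ hallS).symm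
        · have hscard : S.card = 1 := by omega
          obtain ⟨a, ha⟩ := Finset.card_eq_one.mp hscard
          have hia : i = a := by
            have := hiS; rw [ha] at this; simpa using this
          subst hia
          have hzero : util G τ v i = 0 := by
            apply util_eq_zero
            intro j hj hτj
            have hadj : G.Adj (v i) (v j) := (Finset.mem_filter.mp hj).2
            have hvi : v i ∈ C q := ((Finset.mem_filter.mp hiS).2).1
            have hvj : v j ∈ C q := hclosed q _ hvi _ hadj
            have hjS : j ∈ S := Finset.mem_filter.mpr ⟨Finset.mem_univ _, hvj,
              by rw [hτj, hτi]⟩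
            rw [ha] at hjS
            have : j = i := by simpa using hjS
            subst this
            exact G.irrefl hadj
          rw [hzero]
          exact util_nonneg G τ v' i
      · have hvi' : v' i = v i := hfnS i hiS
        by_cases hiq : v i ∈ C q
        · have hτi : τ i ≠ t := fun h =>
            hiS (Finset.mem_filter.mpr ⟨Finset.mem_univ _, hiq, h⟩)
          apply util_mono
          · intro j hj
            have hadj : G.Adj (v' i) (v' j) := (Finset.mem_filter.mp hj).2
            rw [hvi'] at hadj
            by_cases hjS : j ∈ S
            · exfalso
              have h1 : v' j ∈ C q := hclosed q _ hiq _ hadj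
              exact hpqne (huniq _ _ _ (hfSp j hjS) h1)
            · rw [hv'app j, hfnS j hjS] at hadj
              exact Finset.mem_filter.mpr ⟨Finset.mem_univ _, hadj⟩
          · intro j hj hτj
            have hadj : G.Adj (v i) (v j) := (Finset.mem_filter.mp hj).2
            have hjS : j ∉ S := fun h =>
              hτi (hτj ▸ ((Finset.mem_filter.mp h).2).2)
            have : G.Adj (v' i) (v' j) := by
              rw [hvi', hv'app j, hfnS j hjS]; exact hadj
            exact Finset.mem_filter.mpr ⟨Finset.mem_univ _, this⟩
        · obtain ⟨j0, hj0⟩ := hcover (v i)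
          have hj0q : j0 ≠ q := fun h => hiq (h ▸ hj0)
          have hj0p : j0 ≠ p := fun h => hpunocc i (h ▸ hj0)
          refine le_of_eq (util_congr G τ v v' i ?_)
          ext j
          simp only [occNbrs, Finset.mem_filter, Finset.mem_univ, true_and, hvi']
          by_cases hjS : j ∈ S
          · constructor
            · intro hadj
              exact absurd (huniq _ _ _ (hclosed j0 _ hj0 _ hadj) (hfSp j hjS)) hj0p
            · intro hadj
              exact absurd (huniq _ _ _ (hclosed j0 _ hj0 _ hadj)
                (((Finset.mem_filter.mp hjS).2).1)) hj0q
          · rw [hv'app j, hfnS j hjS]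
    exact Finset.sum_le_sum (fun i _ => hkey i)
  · -- bad set strictly decreases
    set v' : A ↪ V := ⟨f, hinj⟩ with hv'
    have hgoodS : ∀ i ∈ S, ¬∃ j : Fin m, ¬((j:ℕ) < n) ∧ v' i ∈ C j := by
      rintro i hi ⟨j, hjn, hij⟩
      have : j = p := huniq _ _ _ hij (hfSp i hi)
      exact hjn (this ▸ hplow)
    have hsub : (univ.filter fun i : A => ∃ j : Fin m, ¬((j:ℕ) < n) ∧ v' i ∈ C j)
        ⊆ (univ.filter fun i : A => ∃ j : Fin m, ¬((j:ℕ) < n) ∧ v i ∈ C j) := by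
      intro i hi
      have hbad := (Finset.mem_filter.mp hi).2
      by_cases hiS : i ∈ S
      · exact absurd hbad (hgoodS i hiS)
      · obtain ⟨j, hjn, hij⟩ := hbad
        rw [show v' i = v i from hfnS i hiS] at hij
        exact Finset.mem_filter.mpr ⟨Finset.mem_univ _, j, hjn, hij⟩
    refine Finset.ssubset_iff_of_subset hsub |>.mpr ?_
    refine ⟨i0, Finset.mem_filter.mpr ⟨Finset.mem_univ _, q, hq, hvq⟩, ?_⟩
    intro hmem
    exact hgoodS i0 hi0S (Finset.mem_filter.mp hmem).2

theorem welfare_optimal_on_largest_components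
    {V A : Type*} [Fintype V] [Fintype A]
    (G : SimpleGraph V) (τ : A → Bool) (r b m : ℕ)
    (hr : (univ.filter (fun i => τ i = true)).card = r)
    (hb : (univ.filter (fun i => τ i = false)).card = b)
    (hrb : r + b ≤ Fintype.card V)
    (C : Fin m → Finset V)
    (hne : ∀ j, (C j).Nonempty)
    (hconn : ∀ j, (G.induce ((C j) : Set V)).Connected)
    (hclosed : ∀ j, ∀ x ∈ C j, ∀ y : V, G.Adj x y → y ∈ C j)
    (hdisj : ∀ j j' : Fin m, j ≠ j' → Disjoint (C j) (C j'))
    (hcover : ∀ x : V, ∃ j, x ∈ C j)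
    (hsorted : ∀ j j' : Fin m, j ≤ j' → (C j').card ≤ (C j).card) :
    ∃ v : A ↪ V, (∀ v' : A ↪ V, SW G τ v' ≤ SW G τ v) ∧
      ∀ i : A, ∃ j : Fin m, (j : ℕ) < r + b ∧ v i ∈ C j := by
  classical
  have hcardA : Fintype.card A = r + b := by
    rw [← hr, ← hb, ← Finset.card_univ,
      ← Finset.card_filter_add_card_filter_not (p := fun i => τ i = true)]
    congr 1
    apply congrArg
    apply Finset.filter_congr
    intro i _
    simp [Bool.not_eq_true]
  haveI hNE : Nonempty (A ↪ V) := Function.Embedding.nonempty_of_card_le (hcardA ▸ hrb)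
  haveI : Fintype (A ↪ V) := Fintype.ofFinite _
  obtain ⟨v0⟩ := hNE
  obtain ⟨vm, _, hvm⟩ := Finset.exists_max_image (univ : Finset (A ↪ V)) (SW G τ)
    ⟨v0, Finset.mem_univ _⟩
  set M : Finset (A ↪ V) := univ.filter (fun w => ∀ w', SW G τ w' ≤ SW G τ w) with hM
  have hvmM : vm ∈ M := Finset.mem_filter.mpr ⟨Finset.mem_univ _,
    fun w' => hvm w' (Finset.mem_univ _)⟩
  obtain ⟨v, hvM, hmin⟩ := Finset.exists_min_image M
    (fun w => (univ.filter fun i : A => ∃ j : Fin m, ¬((j:ℕ) < r+b) ∧ w i ∈ C j).card)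
    ⟨vm, hvmM⟩
  have hopt : ∀ w, SW G τ w ≤ SW G τ v := (Finset.mem_filter.mp hvM).2
  refine ⟨v, hopt, ?_⟩
  have hempty : (univ.filter fun i : A => ∃ j : Fin m, ¬((j:ℕ) < r+b) ∧ v i ∈ C j) = ∅ := by
    by_contra h
    obtain ⟨i0, hi0⟩ := Finset.nonempty_of_ne_empty h
    obtain ⟨q, hq, hvq⟩ := (Finset.mem_filter.mp hi0).2
    obtain ⟨v', hSW, hss⟩ := move_lemma G τ (r+b) m (le_of_eq hcardA) C hconn hclosed
      hdisj hcover hsorted v i0 q hq hvq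
    have hv'M : v' ∈ M := Finset.mem_filter.mpr ⟨Finset.mem_univ _,
      fun w => le_trans (hopt w) hSW⟩
    have hle := hmin v' hv'M
    exact absurd (Finset.card_lt_card hss) (not_lt.mpr hle)
  intro i
  obtain ⟨j, hj⟩ := hcover (v i)
  refine ⟨j, ?_, hj⟩
  by_contra hjn
  have hmem : i ∈ (univ.filter fun i : A => ∃ j : Fin m, ¬((j:ℕ) < r+b) ∧ v i ∈ C j) :=
    Finset.mem_filter.mpr ⟨Finset.mem_univ _, j, hjn, hj⟩
  rw [hempty] at hmem
  exact absurd hmem (Finset.notMem_empty i)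
end
end
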